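/- In the regular martingale setting (E_j f ≤ c E_{j−1} f for all f ≥ 0), the good part g = qfq + ∑_j p_j E_j(f) p_j of the Calderón–Zygmund decomposition at height λ satisfies ‖g‖₁ ≤ ‖f‖₁ and ‖g‖_∞ ≤ c λ. -/

import Mathlib

open Matrix
open scoped ComplexOrder

/-- The trace norm `‖A‖₁ = tr √(AᴴA)` of a complex matrix. -/
noncomputable def traceNorm {m : ℕ} (A : Matrix (Fin m) (Fin m) ℂ) : ℝ :=
  (((Matrix.posSemidef_conjTranspose_mul_self A).1.eigenvectorUnitary.1 *
      diagonal (((↑) : ℝ → ℂ) ∘ (√·) ∘ (Matrix.posSemidef_conjTranspose_mul_self A).1.eigenvalues) *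
      (star (Matrix.posSemidef_conjTranspose_mul_self A).1.eigenvectorUnitary :
        Matrix (Fin m) (Fin m) ℂ)).trace).re

lemma psd_add' {m : ℕ} {A B : Matrix (Fin m) (Fin m) ℂ} (hA : A.PosSemidef)
    (hB : B.PosSemidef) : (A + B).PosSemidef :=
  hA.add hB

lemma psd_smul' {m : ℕ} {A : Matrix (Fin m) (Fin m) ℂ} (r : ℝ) (hr : 0 ≤ r)
    (hA : A.PosSemidef) : ((r : ℂ) • A).PosSemidef := by
  refine ⟨?_, fun x => ?_⟩
  · unfold Matrix.IsHermitian
    rw [conjTranspose_smul]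
    simp [hA.1.eq, Complex.star_def, Complex.conj_ofReal]
  · have := hA.smul (show (0:ℂ) ≤ (r:ℂ) by exact_mod_cast hr)
    exact this.2 x

lemma traceNorm_psd {m : ℕ} {A : Matrix (Fin m) (Fin m) ℂ} (hA : A.PosSemidef) :
    traceNorm A = A.trace.re := by
  open scoped MatrixOrder in
  unfold traceNorm
  have hH := (posSemidef_conjTranspose_mul_self A).1
  have e : (Matrix.posSemidef_conjTranspose_mul_self A).1.eigenvectorUnitary.1 *
      diagonal (((↑) : ℝ → ℂ) ∘ (√·) ∘ (Matrix.posSemidef_conjTranspose_mul_self A).1.eigenvalues) *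
      (star (Matrix.posSemidef_conjTranspose_mul_self A).1.eigenvectorUnitary :
        Matrix (Fin m) (Fin m) ℂ) = cfc Real.sqrt (Aᴴ * A) := by
    rw [(posSemidef_conjTranspose_mul_self A).1.cfc_eq]
    rfl
  have h2 := CFC.sqrt_eq_real_sqrt (A * A) (by simpa [hA.1.eq] using (posSemidef_conjTranspose_mul_self A).nonneg)
  rw [CFC.sqrt_mul_self A hA.nonneg, cfcₙ_eq_cfc (hf0 := Real.sqrt_zero)] at h2
  rw [e, hA.1.eq, ← h2]

/-- In the regular martingale setting (`E_{j+1} x ≤ c E_j x` for `x ≥ 0`), the good part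
`g = qfq + ∑_j p_j E_j(f) p_j` of the Calderón–Zygmund decomposition at height `λ`
satisfies `‖g‖₁ ≤ ‖f‖₁` and `0 ≤ g ≤ cλ·1` (i.e. `‖g‖_∞ ≤ cλ`). -/
theorem cz_good_part_regular {m : ℕ}
    (E : ℕ → Matrix (Fin m) (Fin m) ℂ →ₗ[ℂ] Matrix (Fin m) (Fin m) ℂ)
    (hidem : ∀ j, (E j).comp (E j) = E j)
    (htower : ∀ j k, (E j).comp (E k) = E (min j k))
    (hpos : ∀ j x, x.PosSemidef → (E j x).PosSemidef)
    (htr : ∀ j x, (E j x).trace = x.trace)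
    (hbimod : ∀ j (a b x : Matrix (Fin m) (Fin m) ℂ),
        E j a = a → E j b = b → E j (a * x * b) = a * E j x * b)
    (c : ℝ) (hc : 0 < c)
    (hreg : ∀ j x, x.PosSemidef → ((c : ℂ) • E j x - E (j + 1) x).PosSemidef)
    (f : Matrix (Fin m) (Fin m) ℂ) (hf : f.PosSemidef)
    (lam : ℝ) (hlam : 0 < lam)
    (q : ℕ → Matrix (Fin m) (Fin m) ℂ)
    (hq0 : q 0 = 1)
    (hqmem : ∀ j, E j (q j) = q j)
    (hqproj : ∀ j, (q j)ᴴ = q j ∧ q j * q j = q j)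
    (hqdec : ∀ j, q (j + 1) * q j = q (j + 1) ∧ q j * q (j + 1) = q (j + 1))
    (hqlevel : ∀ j, ((lam : ℂ) • q j - q j * E j f * q j).PosSemidef)
    (hqcomm : ∀ j,
        q (j + 1) * (q j * E (j + 1) f * q j) = (q j * E (j + 1) f * q j) * q (j + 1))
    (N : ℕ) (hstab : ∀ j, N ≤ j → q j = q N)
    (hqf : ((lam : ℂ) • q N - q N * f * q N).PosSemidef) :
    letI g : Matrix (Fin m) (Fin m) ℂ :=
      q N * f * q N
        + ∑ j ∈ Finset.range N, (q j - q (j + 1)) * E (j + 1) f * (q j - q (j + 1))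
    traceNorm g ≤ traceNorm f ∧ g.PosSemidef ∧
      (((c * lam : ℝ) : ℂ) • (1 : Matrix (Fin m) (Fin m) ℂ) - g).PosSemidef := by
  set P : ℕ → Matrix (Fin m) (Fin m) ℂ := fun j => q j - q (j + 1) with hPdef
  have hqH : ∀ j, (q j)ᴴ = q j := fun j => (hqproj j).1
  have hqI : ∀ j, q j * q j = q j := fun j => (hqproj j).2
  have hPH : ∀ j, (P j)ᴴ = P j := fun j => by
    simp [hPdef, conjTranspose_sub, hqH]
  have hPq : ∀ j, P j * q j = P j := fun j => by
    simp [hPdef, sub_mul, hqI, (hqdec j).1]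
  have hqP : ∀ j, q j * P j = P j := fun j => by
    simp [hPdef, mul_sub, hqI, (hqdec j).2]
  have hPP : ∀ j, P j * P j = P j := fun j => by
    have : P j * P j = P j * q j - P j * q (j + 1) := by rw [hPdef]; simp [mul_sub]
    rw [this, hPq]
    have : P j * q (j + 1) = 0 := by
      simp [hPdef, sub_mul, (hqdec j).2, hqI]
    rw [this, sub_zero]
  -- conditional expectations fix 1, q j, P j
  have hE1 : ∀ j, E j (1 : Matrix (Fin m) (Fin m) ℂ) = 1 := by
    have h0 : E 0 1 = 1 := by rw [← hq0]; exact hqmem 0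
    intro j
    have := LinearMap.congr_fun (htower j 0) 1
    simp only [LinearMap.comp_apply, Nat.min_zero, h0] at this
    exact this
  have hEq : ∀ j, E (j + 1) (q j) = q j := by
    intro j
    have := LinearMap.congr_fun (htower (j + 1) j) (q j)
    simp only [LinearMap.comp_apply, min_eq_right (Nat.le_succ j), hqmem j] at this
    exact this
  have hEP : ∀ j, E (j + 1) (P j) = P j := fun j => by
    rw [hPdef]; simp only [map_sub, hEq j, hqmem (j + 1)]
  -- positivity of the pieces of g
  have hg1 : (q N * f * q N).PosSemidef := by
    have := hf.conjTranspose_mul_mul_same (q N)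
    rwa [hqH N] at this
  have hgj : ∀ j, (P j * E (j + 1) f * P j).PosSemidef := fun j => by
    have := (hpos (j + 1) f hf).conjTranspose_mul_mul_same (P j)
    rwa [hPH j] at this
  have hgsum : (∑ j ∈ Finset.range N, P j * E (j + 1) f * P j).PosSemidef := by
    refine Finset.sum_induction _ _ (fun a b ha hb => psd_add' ha hb) Matrix.PosSemidef.zero
      (fun j _ => hgj j)
  have hgPSD : (q N * f * q N + ∑ j ∈ Finset.range N, P j * E (j + 1) f * P j).PosSemidef :=
    psd_add' hg1 hgsum
  -- trace equality
  have htrace : (q N * f * q N + ∑ j ∈ Finset.range N, P j * E (j + 1) f * P j).trace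
      = f.trace := by
    have h1 : (q N * f * q N).trace = (f * q N).trace := by
      rw [trace_mul_cycle, hqI N, trace_mul_comm]
    have h2 : ∀ j, (P j * E (j + 1) f * P j).trace = (f * P j).trace := by
      intro j
      have e1 : (P j * E (j + 1) f * P j).trace = (E (j + 1) f * P j).trace := by
        rw [trace_mul_cycle, hPP j, trace_mul_comm]
      have e2 : E (j + 1) (f * P j) = E (j + 1) f * P j := by
        have := hbimod (j + 1) 1 (P j) f (hE1 (j + 1)) (hEP j)
        simpa using this
      rw [e1, ← e2, htr]
    have hsum : (∑ j ∈ Finset.range N, P j * E (j + 1) f * P j).trace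
        = ∑ j ∈ Finset.range N, (f * P j).trace := by
      rw [trace_sum]; exact Finset.sum_congr rfl fun j _ => h2 j
    have htel : ∑ j ∈ Finset.range N, P j = 1 - q N := by
      rw [hPdef]
      rw [Finset.sum_range_sub' q N, hq0]
    calc (q N * f * q N + ∑ j ∈ Finset.range N, P j * E (j + 1) f * P j).trace
        = (f * q N).trace + ∑ j ∈ Finset.range N, (f * P j).trace := by
          rw [trace_add, h1, hsum]
      _ = (f * q N).trace + (f * ∑ j ∈ Finset.range N, P j).trace := by
          rw [Finset.mul_sum, trace_sum]
      _ = (f * (q N + ∑ j ∈ Finset.range N, P j)).trace := by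
          rw [mul_add, trace_add]
      _ = f.trace := by rw [htel]; simp
  refine ⟨?_, hgPSD, ?_⟩
  · rw [traceNorm_psd hgPSD, traceNorm_psd hf, htrace]
  -- the L∞ bound
  · have htel : (1 : Matrix (Fin m) (Fin m) ℂ) = q N + ∑ j ∈ Finset.range N, P j := by
      rw [hPdef, Finset.sum_range_sub' q N, hq0]; abel
    have hsplit : ((c * lam : ℝ) : ℂ) • (1 : Matrix (Fin m) (Fin m) ℂ)
          - (q N * f * q N + ∑ j ∈ Finset.range N, P j * E (j + 1) f * P j)
        = (((c * lam : ℝ) : ℂ) • q N - q N * f * q N)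
          + ∑ j ∈ Finset.range N,
              (((c * lam : ℝ) : ℂ) • P j - P j * E (j + 1) f * P j) := by
      rw [htel, smul_add, Finset.smul_sum, Finset.sum_sub_distrib]
      abel
    rw [hsplit]
    refine psd_add' ?_ ?_
    · -- cλ qN - qN f qN
      have hone : (((c : ℝ) : ℂ) • (1 : Matrix (Fin m) (Fin m) ℂ) - 1).PosSemidef := by
        have := hreg 0 1 Matrix.PosSemidef.one
        rwa [hE1 0, hE1 1] at this
      have hconj : ((c : ℂ) • q N - q N).PosSemidef := by
        have := hone.conjTranspose_mul_mul_same (q N)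
        have e : (q N)ᴴ * ((c : ℂ) • (1 : Matrix (Fin m) (Fin m) ℂ) - 1) * q N
            = (c : ℂ) • q N - q N := by
          rw [hqH N]
          simp [mul_sub, sub_mul, mul_smul_comm, smul_mul_assoc, hqI N]
        rwa [e] at this
      have h1 := psd_smul' lam hlam.le hconj
      have h2 := psd_add' h1 hqf
      have e : (lam : ℂ) • ((c : ℂ) • q N - q N) + ((lam : ℂ) • q N - q N * f * q N)
          = ((c * lam : ℝ) : ℂ) • q N - q N * f * q N := by
        push_cast
        rw [smul_sub, smul_smul, mul_comm]
        abel
      rwa [e] at h2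
    · refine Finset.sum_induction _ _ (fun a b ha hb => psd_add' ha hb)
        Matrix.PosSemidef.zero (fun j _ => ?_)
      -- cλ P j - P j E_{j+1} f P j
      have habs1 : ∀ X : Matrix (Fin m) (Fin m) ℂ, P j * (q j * X) = P j * X := fun X => by
        rw [← mul_assoc, hPq j]
      have habs2 : ∀ X : Matrix (Fin m) (Fin m) ℂ, P j * (P j * X) = P j * X := fun X => by
        rw [← mul_assoc, hPP j]
      have hkey : ((c * lam : ℝ) : ℂ) • P j - P j * E (j + 1) f * P j
          = (c : ℂ) • (P j * ((lam : ℂ) • q j - q j * E j f * q j) * P j)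
            + P j * (q j * ((c : ℂ) • E j f - E (j + 1) f) * q j) * P j := by
        push_cast
        simp only [mul_sub, sub_mul, smul_sub, mul_smul_comm, smul_mul_assoc, mul_assoc,
          habs1, habs2, hPP, hqP, hPq, smul_smul]
        abel
      rw [hkey]
      refine psd_add' ?_ ?_
      · refine psd_smul' c hc.le ?_
        have := (hqlevel j).conjTranspose_mul_mul_same (P j)
        rwa [hPH j] at this
      · have h1 := (hreg j f hf).conjTranspose_mul_mul_same (q j)
        rw [hqH j] at h1
        have h2 := h1.conjTranspose_mul_mul_same (P j)
        rwa [hPH j] at h2
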